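/- Let ℓ ≥ 4k for a positive integer k, let s ≤ kℓ, let r ≥ 3, and suppose |X| ≥ (r−3)(k³+9) + 4k². Then (ℓ/(2k))·|X| − (r−3)·s ≥ |X| + s. -/

import Mathlib

/-- The edge-counting inequality in the correctness proof of the Multi-Killer
Supported rule: for integers `k ≥ 1` and `r ≥ 3` and reals `ℓ ≥ 4k`, `0 ≤ s ≤ kℓ`,
and `X ≥ (r−3)(k³+9) + 4k²` (the size of the set `X`),
we have `(ℓ/(2k))·X − (r−3)·s ≥ X + s`. -/
theorem multiKillerSupported_count (k r : ℕ) (hk : 1 ≤ k) (hr : 3 ≤ r)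
    (ℓ s X : ℝ) (hℓ : 4 * k ≤ ℓ) (hs0 : 0 ≤ s) (hs : s ≤ k * ℓ)
    (hX : ((r : ℝ) - 3) * (k ^ 3 + 9) + 4 * k ^ 2 ≤ X) :
    X + s ≤ (ℓ / (2 * k)) * X - ((r : ℝ) - 3) * s := by
  have hk1 : (1 : ℝ) ≤ k := by exact_mod_cast hk
  have hr3 : (3 : ℝ) ≤ r := by exact_mod_cast hr
  have hkpos : (0 : ℝ) < 2 * k := by linarith
  have hℓ0 : (0 : ℝ) ≤ ℓ := by linarith
  have ht : (0 : ℝ) ≤ (r : ℝ) - 3 := by linarith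
  rw [div_mul_eq_mul_div, le_sub_iff_add_le, le_div_iff₀ hkpos]
  have hcubeN : 4 * k ^ 2 ≤ k ^ 3 + 9 := by
    rcases le_or_gt k 3 with h | h
    · interval_cases k <;> norm_num
    · nlinarith
  have hcube : 4 * (k:ℝ) ^ 2 ≤ (k:ℝ) ^ 3 + 9 := by exact_mod_cast hcubeN
  nlinarith [mul_le_mul_of_nonneg_left hX hℓ0,
    mul_le_mul_of_nonneg_left hcube (mul_nonneg ht hℓ0),
    mul_le_mul_of_nonneg_left hs (by positivity : (0:ℝ) ≤ 2 * k * ((r:ℝ) - 3 + 1)),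
    mul_nonneg (by linarith : (0:ℝ) ≤ ℓ - 4 * k)
      (by nlinarith : (0:ℝ) ≤ X)]
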